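/- arXiv:1511.06989 — 3 statements merged into one kernel-verified Lean document; each statement's English description precedes it below -/
import Mathlib

section
/- With f₄(n) = (n⁴ − 14n³ + 47n² − 34n)/24 and g as defined by g(2k−1) = 2^(k−6)·55, g(2k) = 2^(k−6)·89 for k ≥ 6, one has g(n) ≤ f₄(n) if and only if 11 ≤ n ≤ 25 (for integers n ≥ 11). -/
def f₄ (n : ℤ) : ℚ := ((n ^ 4 - 14 * n ^ 3 + 47 * n ^ 2 - 34 * n : ℤ) : ℚ) / 24

def g (n : ℤ) : ℤ :=
  if n % 2 = 0 then 2 ^ (n / 2 - 6).toNat * 89 else 2 ^ ((n + 1) / 2 - 6).toNat * 55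

lemma cast_le_iff (n : ℤ) :
    ((g n : ℚ) ≤ f₄ n) ↔ 24 * g n ≤ n ^ 4 - 14 * n ^ 3 + 47 * n ^ 2 - 34 * n := by
  rw [f₄, le_div_iff₀ (by norm_num : (0:ℚ) < 24)]
  constructor
  · intro h
    have : ((24 * g n : ℤ) : ℚ) ≤ ((n ^ 4 - 14 * n ^ 3 + 47 * n ^ 2 - 34 * n : ℤ) : ℚ) := by
      push_cast at h ⊢; linarith
    exact_mod_cast this
  · intro h
    have : ((24 * g n : ℤ) : ℚ) ≤ ((n ^ 4 - 14 * n ^ 3 + 47 * n ^ 2 - 34 * n : ℤ) : ℚ) := by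
      exact_mod_cast h
    push_cast at this ⊢; linarith

lemma gstep (n : ℤ) (hn : 13 ≤ n) : g (n + 2) = 2 * g n := by
  unfold g
  have h2 : (n + 2) % 2 = n % 2 := by omega
  rw [h2]
  by_cases h : n % 2 = 0
  · rw [if_pos h, if_pos h]
    have he : ((n + 2) / 2 - 6).toNat = (n / 2 - 6).toNat + 1 := by omega
    rw [he, pow_succ]; ring
  · rw [if_neg h, if_neg h]
    have he : ((n + 2 + 1) / 2 - 6).toNat = ((n + 1) / 2 - 6).toNat + 1 := by omega
    rw [he, pow_succ]; ring

lemma big (n : ℤ) (hn : 26 ≤ n) :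
    n ^ 4 - 14 * n ^ 3 + 47 * n ^ 2 - 34 * n < 24 * g n := by
  have H := Int.le_induction (m := 26)
    (motive := fun m _ =>
      (m ^ 4 - 14 * m ^ 3 + 47 * m ^ 2 - 34 * m < 24 * g m) ∧
      ((m+1) ^ 4 - 14 * (m+1) ^ 3 + 47 * (m+1) ^ 2 - 34 * (m+1) < 24 * g (m+1)))
    (by constructor <;> · unfold g <;> norm_num <;> decide)
    (by
      intro k hk ih
      refine ⟨ih.2, ?_⟩
      have hg : g (k + 1 + 1) = 2 * g k := by
        have := gstep k (by omega); rw [show k + 1 + 1 = k + 2 by ring, this]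
      rw [hg]
      nlinarith [ih.1, sq_nonneg k, sq_nonneg (k - 26)])
  exact (H n hn).1

/-- For integers `n ≥ 11`, `g(n) ≤ f₄(n)` iff `11 ≤ n ≤ 25`. -/
theorem stmt7 : ∀ n : ℤ, 11 ≤ n → ((g n : ℚ) ≤ f₄ n ↔ n ≤ 25) := by
  intro n hn
  rw [cast_le_iff]
  constructor
  · intro h
    by_contra hc
    exact absurd h (not_le.2 (big n (by omega)))
  · intro h
    interval_cases n <;> (unfold g; norm_num) <;> decide
end

section
/- For a prime p and n ≥ 2m+2 with μ a p-regular partition of n whose largest part is exactly n−m, the rightmost p-ladder intersecting the Young diagram of μ meets μ in exactly one node, namely the node (1, n−m). -/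
/-- Let `p` be a prime and `μ` a `p`-regular partition of `n` (encoded as an antitone
function `ℕ → ℕ` of parts, 0-indexed, with at most `n` parts summing to `n`, in which
no positive part is repeated `p` times) whose largest part is `μ 0 = n - m`.  The
`p`-ladder index of the (0-indexed) node `(r, c)` is `r + (p-1)·c`.  If `n ≥ 2m + 2`,
then the rightmost ladder meeting `μ` intersects it in exactly one node, namely the
node `(0, μ 0 - 1)` (i.e. the node `(1, n-m)` in 1-indexed notation): the node
`(0, μ 0 - 1)` lies in `μ`, and every other node of `μ` has strictly smaller ladder
index. -/
theorem stmt12 (p n m : ℕ) (hp : p.Prime) (hn : 2 * m + 2 ≤ n)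
    (μ : ℕ → ℕ) (hmono : Antitone μ) (hzero : μ n = 0)
    (hsum : ∑ i ∈ Finset.range n, μ i = n)
    (hreg : ∀ i, μ i = μ (i + (p - 1)) → μ i = 0)
    (hfirst : μ 0 = n - m) :
    0 < μ 0 ∧
    ∀ r c : ℕ, c < μ r →
      r + (p - 1) * c < (p - 1) * (μ 0 - 1) ∨ (r = 0 ∧ c = μ 0 - 1) := by
  have hq : 1 ≤ p - 1 := by have := hp.two_le; omega
  have ha : m + 2 ≤ μ 0 := by omega
  refine ⟨by omega, ?_⟩
  intro r c hc
  rcases Nat.eq_zero_or_pos r with rfl | hr1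
  · rcases eq_or_lt_of_le (Nat.le_sub_one_of_lt hc) with h | h
    · exact Or.inr ⟨rfl, h⟩
    · left
      simpa using Nat.mul_lt_mul_of_le_of_lt (le_refl (p-1)) h (by omega)
  · left
    have hrn : r < n := by
      by_contra h
      have : μ r ≤ μ n := hmono (by omega)
      omega
    -- the parts after the first sum to m
    have hsplit : ∑ i ∈ Finset.range n, μ i
        = μ 0 + ∑ i ∈ Finset.Ico 1 n, μ i := by
      rw [Finset.range_eq_Ico, Finset.sum_eq_sum_Ico_succ_bot (by omega)]
    have hrest : ∑ i ∈ Finset.Ico 1 n, μ i = m := by omega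
    have hle : r * μ r ≤ ∑ i ∈ Finset.Ico 1 (r+1), μ i := by
      have : ∀ i ∈ Finset.Ico 1 (r+1), μ r ≤ μ i := by
        intro i hi
        exact hmono (by simp at hi; omega)
      calc r * μ r = ∑ _i ∈ Finset.Ico 1 (r+1), μ r := by
            simp [Nat.Ico_eq_range', mul_comm]
        _ ≤ ∑ i ∈ Finset.Ico 1 (r+1), μ i := Finset.sum_le_sum this
    have hsub : ∑ i ∈ Finset.Ico 1 (r+1), μ i ≤ ∑ i ∈ Finset.Ico 1 n, μ i :=
      Finset.sum_le_sum_of_subset (Finset.Ico_subset_Ico (le_refl 1) (by omega))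
    have hrm : r * μ r ≤ m := by omega
    have hμr : 1 ≤ μ r := by omega
    have hsumrow : μ r + r ≤ m + 1 := by
      obtain ⟨r', rfl⟩ := Nat.exists_eq_add_of_le hr1
      obtain ⟨s, hs⟩ := Nat.exists_eq_add_of_le hμr
      nlinarith
    have h1 : c + r + 1 ≤ μ 0 - 1 := by omega
    have h2 : (p - 1) * (c + r + 1) ≤ (p - 1) * (μ 0 - 1) :=
      Nat.mul_le_mul_left _ h1
    nlinarith
end

section
/- If p ≥ 3 and μ is a p-regular partition of n with μ₁ = n−m and n ≥ 2m+1, and the rightmost p-ladder intersecting μ contains at least two nodes of μ, then n ≤ ⌊pm/(p−1)⌋ + 1. -/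
lemma stmt13_key (p n m : ℕ) (hp3 : 3 ≤ p) (hn : 2 * m + 1 ≤ n)
    (μ : ℕ → ℕ) (hmono : Antitone μ) (hzero : μ n = 0)
    (hsum : ∑ i ∈ Finset.range n, μ i = n)
    (hfirst : μ 0 = n - m)
    (r c r' c' : ℕ) (hlt : r < r') (hc : c < μ r) (hc' : c' < μ r')
    (heq : r + (p - 1) * c = r' + (p - 1) * c')
    (hL : (p - 1) * (n - m - 1) ≤ r' + (p - 1) * c') :
    (p - 1) * (n - m - 1) ≤ m := by
  set q := p - 1 with hq
  have hq2 : 2 ≤ q := by omega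
  -- c' < c
  have hcc : c' < c := by
    by_contra h
    push_neg at h
    have := Nat.mul_le_mul_left q h
    omega
  -- q ≤ r' ... from heq
  have hqc : q * c' + q ≤ q * c := by
    have h := Nat.mul_le_mul_left q hcc
    rw [Nat.mul_succ] at h
    omega
  have hr'q : q ≤ r' := by omega
  -- r' < n
  have hr'n : r' < n := by
    by_contra h
    push_neg at h
    have := hmono h
    omega
  -- m ≥ r' * μ r'
  have hμ0 : μ 0 = n - m := hfirst
  have hn1 : 1 ≤ n := by omega
  have hsum' : ∑ i ∈ Finset.range (n - 1), μ (i + 1) + μ 0 = n := by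
    have := Finset.sum_range_succ' μ (n - 1)
    rw [show n - 1 + 1 = n by omega] at this
    omega
  have hm : ∑ i ∈ Finset.range (n - 1), μ (i + 1) = m := by omega
  have hsub : Finset.range r' ⊆ Finset.range (n - 1) := by
    apply Finset.range_subset_range.2; omega
  have hlow : ∀ i ∈ Finset.range r', μ r' ≤ μ (i + 1) := by
    intro i hi
    exact hmono (by simpa using Nat.succ_le_of_lt (Finset.mem_range.1 hi))
  have h1 : r' * μ r' ≤ ∑ i ∈ Finset.range r', μ (i + 1) := by
    calc r' * μ r' = ∑ _i ∈ Finset.range r', μ r' := by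
          rw [Finset.sum_const, Finset.card_range, smul_eq_mul, mul_comm]
      _ ≤ ∑ i ∈ Finset.range r', μ (i + 1) := Finset.sum_le_sum hlow
  have h2 : ∑ i ∈ Finset.range r', μ (i + 1) ≤ m := by
    rw [← hm]
    exact Finset.sum_le_sum_of_subset hsub
  have h3 : r' * μ r' ≤ m := le_trans h1 h2
  -- r' * μ r' ≥ r' * (c' + 1) = r' + r' * c' ≥ r' + q * c' ≥ q * (n-m-1)
  have h4 : r' * (c' + 1) ≤ r' * μ r' := Nat.mul_le_mul_left r' hc'
  have h5 : q * c' ≤ r' * c' := Nat.mul_le_mul_right c' hr'q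
  have h6 : r' * (c' + 1) = r' + r' * c' := by ring
  omega

/-- Let `p ≥ 3` be a prime and `μ` a `p`-regular partition of `n` (encoded as an
antitone function `ℕ → ℕ` of parts, 0-indexed, with at most `n` parts summing to `n`,
no positive part repeated `p` times) whose largest part is `μ 0 = n - m`, with
`n ≥ 2m + 1`.  The `p`-ladder index of the 0-indexed node `(r, c)` is `r + (p-1)·c`.
If the rightmost `p`-ladder intersecting `μ` (the one of maximal ladder index among
nodes of `μ`) contains at least two nodes of `μ`, then `n ≤ ⌊pm/(p−1)⌋ + 1`. -/
theorem stmt13 (p n m : ℕ) (hp : p.Prime) (hp3 : 3 ≤ p) (hn : 2 * m + 1 ≤ n)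
    (μ : ℕ → ℕ) (hmono : Antitone μ) (hzero : μ n = 0)
    (hsum : ∑ i ∈ Finset.range n, μ i = n)
    (hreg : ∀ i, μ i = μ (i + (p - 1)) → μ i = 0)
    (hfirst : μ 0 = n - m)
    (htwo : ∃ r c r' c' : ℕ, (r, c) ≠ (r', c') ∧ c < μ r ∧ c' < μ r' ∧
        r + (p - 1) * c = r' + (p - 1) * c' ∧
        ∀ r'' c'' : ℕ, c'' < μ r'' → r'' + (p - 1) * c'' ≤ r + (p - 1) * c) :
    n ≤ p * m / (p - 1) + 1 := by
  obtain ⟨r, c, r', c', hne, hc, hc', heq, hmax⟩ := htwo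
  have hμ0pos : 0 < μ 0 := by omega
  have hLmax : (p - 1) * (n - m - 1) ≤ r + (p - 1) * c := by
    have := hmax 0 (n - m - 1) (by omega)
    omega
  have hkey : (p - 1) * (n - m - 1) ≤ m := by
    rcases lt_trichotomy r r' with h | h | h
    · exact stmt13_key p n m hp3 hn μ hmono hzero hsum hfirst r c r' c' h hc hc'
        heq (by omega)
    · exfalso
      subst h
      have hcc : c = c' := by
        have h1 : (p - 1) * c = (p - 1) * c' := by omega
        exact Nat.eq_of_mul_eq_mul_left (by omega) h1
      exact hne (by rw [hcc])
    · exact stmt13_key p n m hp3 hn μ hmono hzero hsum hfirst r' c' r c h hc' hc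
        (by omega) (by omega)
  -- arithmetic conclusion
  set q := p - 1 with hq
  have hq2 : 2 ≤ q := by omega
  have hdiv : p * m / q = m + m / q := by
    have : p * m = q * m + m := by
      have : p = q + 1 := by omega
      rw [this]; ring
    rw [this, Nat.mul_add_div (by omega)]
  have hle : n - m - 1 ≤ m / q := (Nat.le_div_iff_mul_le (by omega)).2 (by
    calc (n - m - 1) * q = q * (n - m - 1) := by ring
      _ ≤ m := hkey)
  rw [hdiv]
  omega
end
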